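/- Let $a \in (0,1)$, let $\mu$ be a probability measure on $[0,\infty)$ with finite mean $m_\mu = \int x\, d\mu(x)$, and let $(X_n)_{n\geq 1}$ be a sequence of nonnegative random variables on a probability space $(\Omega, P)$ such that for all $n \geq 1$, the conditional law of $X_{n+1}$ given $X_1,\dots,X_n$ is absolutely continuous with respect to $\mu$ with Radon–Nikodym density bounded between $a$ and $a^{-1}$ (and the law of $X_1$ satisfies the same bound with respect to $\mu$). Then $P$-almost surely, $a\, m_\mu \leq \liminf_{n\to\infty} \frac{1}{n}\sum_{k=1}^n X_k \leq \limsup_{n\to\infty} \frac{1}{n}\sum_{k=1}^n X_k \leq a^{-1} m_\mu$. -/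

import Mathlib

open MeasureTheory Filter Topology

section Helpers
variable {Ω : Type*} {m0 : MeasurableSpace Ω} {P : Measure Ω} [IsProbabilityMeasure P]

lemma my_integrable_of_ae_bdd {f : Ω → ℝ} (hm : AEStronglyMeasurable f P) {C : ℝ}
    (h : ∀ᵐ ω ∂P, |f ω| ≤ C) : Integrable f P :=
  (integrable_const C).mono' hm (by simpa [Real.norm_eq_abs] using h)

lemma my_integral_mul_condexp_eq {m : MeasurableSpace Ω} (hm : m ≤ m0) {f g : Ω → ℝ}
    (hf : StronglyMeasurable[m] f) (hfg : Integrable (f * g) P) (hg : Integrable g P) :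
    ∫ ω, f ω * g ω ∂P = ∫ ω, f ω * (P[g|m]) ω ∂P := by
  have h1 : ∫ ω, (f * g) ω ∂P = ∫ ω, (P[f * g|m]) ω ∂P := (integral_condExp hm).symm
  have h2 : ∫ ω, (P[f * g|m]) ω ∂P = ∫ ω, (f * P[g|m]) ω ∂P :=
    integral_congr_ae (condExp_mul_of_stronglyMeasurable_left hf hfg hg)
  simpa using h1.trans h2

lemma my_kronecker {V : ℕ → ℝ} {L : ℝ}
    (h : Tendsto (fun n => ∑ k ∈ Finset.Icc 1 n, V k / k) atTop (𝓝 L)) :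
    Tendsto (fun n => (∑ k ∈ Finset.Icc 1 n, V k) / n) atTop (𝓝 0) := by
  set M : ℕ → ℝ := fun n => ∑ k ∈ Finset.Icc 1 n, V k / k with hM
  have habel : ∀ n : ℕ, ∑ k ∈ Finset.Icc 1 n, V k = n * M n - ∑ j ∈ Finset.range n, M j := by
    intro n
    induction n with
    | zero => simp [M]
    | succ n ih =>
      rw [Finset.sum_Icc_succ_top (by omega), ih, Finset.sum_range_succ]
      have hMs : M (n + 1) = M n + V (n + 1) / (n + 1) := by
        rw [hM]; simp only; rw [Finset.sum_Icc_succ_top (by omega)]; push_cast; ring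
      rw [hMs]
      have : ((n : ℝ) + 1) ≠ 0 := by positivity
      push_cast
      field_simp
      ring
  have hces : Tendsto (fun n : ℕ => (n : ℝ)⁻¹ * ∑ j ∈ Finset.range n, M j) atTop (𝓝 L) :=
    h.cesaro
  have heq : (fun n : ℕ => (∑ k ∈ Finset.Icc 1 n, V k) / n) =ᶠ[atTop]
      fun n : ℕ => M n - (n : ℝ)⁻¹ * ∑ j ∈ Finset.range n, M j := by
    filter_upwards [eventually_gt_atTop 0] with n hn
    have hn' : (n : ℝ) ≠ 0 := by positivity
    rw [habel n]
    field_simp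
  have := h.sub hces
  rw [sub_self] at this
  exact Tendsto.congr' heq.symm this

lemma lemmaA (ℱ : Filtration ℕ m0) (Z : ℕ → Ω → ℝ)
    (hmeas : ∀ k, 1 ≤ k → StronglyMeasurable[ℱ k] (Z k))
    (c : ℕ → ℝ) (hc : ∀ k, 0 ≤ c k) (hbdd : ∀ k ω, |Z k ω| ≤ c k)
    (S : ℝ)
    (hsum : ∀ n : ℕ, ∑ k ∈ Finset.Icc 1 n, (∫ ω, (Z k ω) ^ 2 ∂P) / (k : ℝ) ^ 2 ≤ S) :
    ∀ᵐ ω ∂P, Tendsto (fun n : ℕ =>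
      (∑ k ∈ Finset.Icc 1 n, (Z k ω - (P[Z k|ℱ (k - 1)]) ω)) / n) atTop (𝓝 0) := by
  classical
  set W : ℕ → Ω → ℝ := fun k => P[Z k|ℱ (k - 1)] with hW
  set V : ℕ → Ω → ℝ := fun k ω => Z k ω - W k ω with hV
  -- basic facts
  have hZsm : ∀ k, 1 ≤ k → StronglyMeasurable (Z k) := fun k hk => (hmeas k hk).mono (ℱ.le k)
  have hZint : ∀ k, 1 ≤ k → Integrable (Z k) P := fun k hk =>
    my_integrable_of_ae_bdd (hZsm k hk).aestronglyMeasurable (ae_of_all _ (hbdd k))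
  have hWsm : ∀ k, StronglyMeasurable[ℱ (k - 1)] (W k) := fun k => stronglyMeasurable_condExp
  have hWint : ∀ k, Integrable (W k) P := fun k => integrable_condExp
  have hWbdd : ∀ k, ∀ᵐ ω ∂P, |W k ω| ≤ c k := by
    intro k
    have := ae_bdd_condExp_of_ae_bdd (μ := P) (m := ℱ (k - 1)) (R := ⟨c k, hc k⟩)
      (f := Z k) (ae_of_all _ (hbdd k))
    exact this
  have hVsm : ∀ k, 1 ≤ k → StronglyMeasurable[ℱ k] (V k) := fun k hk =>
    (hmeas k hk).sub ((hWsm k).mono (ℱ.mono (Nat.sub_le k 1)))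
  have hVint : ∀ k, 1 ≤ k → Integrable (V k) P := fun k hk => (hZint k hk).sub (hWint k)
  have hVbdd : ∀ k, ∀ᵐ ω ∂P, |V k ω| ≤ 2 * c k := by
    intro k
    filter_upwards [hWbdd k] with ω hw
    calc |Z k ω - W k ω| ≤ |Z k ω| + |W k ω| := abs_sub _ _
      _ ≤ c k + c k := add_le_add (hbdd k ω) hw
      _ = 2 * c k := by ring
  -- conditional expectation of V vanishes
  have hVcond : ∀ n : ℕ, P[V (n + 1)|ℱ n] =ᵐ[P] 0 := by
    intro n
    have h1 : P[V (n + 1)|ℱ n] =ᵐ[P] P[Z (n + 1)|ℱ n] - P[W (n + 1)|ℱ n] :=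
      condExp_sub (hZint (n + 1) (by omega)) (hWint (n + 1)) _
    have h2 : P[W (n + 1)|ℱ n] = W (n + 1) := by
      refine condExp_of_stronglyMeasurable (ℱ.le n) ?_ (hWint (n + 1))
      simpa using hWsm (n + 1)
    have h3 : W (n + 1) = P[Z (n + 1)|ℱ n] := by simp [hW]
    filter_upwards [h1] with ω h
    simp only [Pi.zero_apply]
    rw [h, Pi.sub_apply, h2, h3]
    ring
  -- the martingale
  set M : ℕ → Ω → ℝ := fun n ω => ∑ k ∈ Finset.Icc 1 n, (k : ℝ)⁻¹ * V k ω with hM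
  have hadap : StronglyAdapted ℱ M := by
    intro n
    refine Finset.stronglyMeasurable_fun_sum _ fun k hk => ?_
    rw [Finset.mem_Icc] at hk
    exact ((hVsm k hk.1).mono (ℱ.mono hk.2)).const_mul _
  have hMint : ∀ n, Integrable (M n) P := by
    intro n
    refine integrable_finset_sum _ fun k hk => ?_
    rw [Finset.mem_Icc] at hk
    exact ((hVint k hk.1).const_mul _)
  have hMsucc : ∀ n ω, M (n + 1) ω = M n ω + (n + 1 : ℝ)⁻¹ * V (n + 1) ω := by
    intro n ω
    rw [hM]; simp only
    rw [Finset.sum_Icc_succ_top (by omega)]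
    push_cast; ring
  have hmart : Martingale M ℱ P := by
    refine martingale_nat hadap hMint fun n => ?_
    have e1 : M (n + 1) = M n + fun ω => (n + 1 : ℝ)⁻¹ * V (n + 1) ω := by
      funext ω; rw [hMsucc n ω]; rfl
    have h1 : P[M (n + 1)|ℱ n] =ᵐ[P]
        P[M n|ℱ n] + P[fun ω => (n + 1 : ℝ)⁻¹ * V (n + 1) ω|ℱ n] := by
      rw [e1]
      exact condExp_add (hMint n) ((hVint (n + 1) (by omega)).const_mul _) _
    have h2 : P[M n|ℱ n] = M n :=
      condExp_of_stronglyMeasurable (ℱ.le n) (hadap n) (hMint n)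
    have h3 : P[fun ω => (n + 1 : ℝ)⁻¹ * V (n + 1) ω|ℱ n] =ᵐ[P] 0 := by
      have hsmul : P[fun ω => (n + 1 : ℝ)⁻¹ * V (n + 1) ω|ℱ n]
          =ᵐ[P] (n + 1 : ℝ)⁻¹ • P[V (n + 1)|ℱ n] := by
        exact condExp_smul (μ := P) (m := ℱ n) ((n : ℝ) + 1)⁻¹ (V (n + 1))
      filter_upwards [hsmul, hVcond n] with ω ha hb
      simp only [Pi.smul_apply, smul_eq_mul] at ha
      simp [ha, hb]
    filter_upwards [h1, h3] with ω ha hb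
    rw [ha, Pi.add_apply, h2, hb]
    simp
  -- integrability facts
  have hMabs : ∀ n ω, |M n ω| ≤ ∑ k ∈ Finset.Icc 1 n, |V k ω| := by
    intro n ω
    calc |M n ω| ≤ ∑ k ∈ Finset.Icc 1 n, |(k : ℝ)⁻¹ * V k ω| := Finset.abs_sum_le_sum_abs _ _
      _ ≤ ∑ k ∈ Finset.Icc 1 n, |V k ω| := by
          refine Finset.sum_le_sum fun k hk => ?_
          rw [Finset.mem_Icc] at hk
          rw [abs_mul]
          have h1 : |(k : ℝ)⁻¹| ≤ 1 := by
            rw [abs_inv, Nat.abs_cast]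
            refine inv_le_one_of_one_le₀ ?_
            exact_mod_cast hk.1
          nlinarith [abs_nonneg (V k ω), abs_nonneg ((k : ℝ)⁻¹)]
  have hMbdd : ∀ n, ∀ᵐ ω ∂P, |M n ω| ≤ ∑ k ∈ Finset.Icc 1 n, 2 * c k := by
    intro n
    filter_upwards [ae_all_iff.2 hVbdd] with ω hw
    exact (hMabs n ω).trans (Finset.sum_le_sum fun k _ => hw k)
  have habs_sq : ∀ (x d : ℝ), |x| ≤ d → |x ^ 2| ≤ d ^ 2 := by
    intro x d h
    rw [abs_pow]
    exact pow_le_pow_left₀ (abs_nonneg x) h 2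
  have hZ2int : ∀ k, 1 ≤ k → Integrable (fun ω => Z k ω ^ 2) P := by
    intro k hk
    have hsm : StronglyMeasurable (fun ω => Z k ω ^ 2) := by
      have : (fun ω => Z k ω ^ 2) = fun ω => Z k ω * Z k ω := by funext ω; ring
      rw [this]; exact (hZsm k hk).mul (hZsm k hk)
    exact my_integrable_of_ae_bdd hsm.aestronglyMeasurable
      (ae_of_all _ fun ω => habs_sq _ _ (hbdd k ω))
  -- key orthogonality: E[M n * V (n+1)] = 0
  have hMVzero : ∀ n, ∫ ω, M n ω * V (n + 1) ω ∂P = 0 := by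
    intro n
    have hMsm : StronglyMeasurable (M n) := (hadap n).mono (ℱ.le n)
    have hVsm' : StronglyMeasurable (V (n + 1)) := (hVsm (n + 1) (by omega)).mono (ℱ.le (n + 1))
    have hprod : Integrable (M n * V (n + 1)) P := by
      refine my_integrable_of_ae_bdd (hMsm.mul hVsm').aestronglyMeasurable
        (C := (∑ k ∈ Finset.Icc 1 n, 2 * c k) * (2 * c (n + 1))) ?_
      filter_upwards [hMbdd n, hVbdd (n + 1)] with ω h1 h2
      rw [Pi.mul_apply, abs_mul]
      have h0 : (0:ℝ) ≤ ∑ k ∈ Finset.Icc 1 n, 2 * c k :=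
        (abs_nonneg _).trans h1
      exact mul_le_mul h1 h2 (abs_nonneg _) h0
    have := my_integral_mul_condexp_eq (ℱ.le n) (hadap n) hprod (hVint (n + 1) (by omega))
    rw [this]
    have : ∫ ω, M n ω * (P[V (n + 1)|ℱ n]) ω ∂P = ∫ (_ : Ω), (0:ℝ) ∂P := by
      refine integral_congr_ae ?_
      filter_upwards [hVcond n] with ω h
      rw [h]; simp
    rw [this]; simp
  -- E[V k ^ 2] ≤ E[Z k ^ 2]
  have hVsq : ∀ k, 1 ≤ k → ∫ ω, V k ω ^ 2 ∂P ≤ ∫ ω, Z k ω ^ 2 ∂P := by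
    intro k hk
    have hWsm' : StronglyMeasurable (W k) := (hWsm k).mono (ℱ.le (k - 1))
    have hWZint : Integrable (W k * Z k) P := by
      refine my_integrable_of_ae_bdd (hWsm'.mul (hZsm k hk)).aestronglyMeasurable
        (C := c k * c k) ?_
      filter_upwards [hWbdd k] with ω h1
      rw [Pi.mul_apply, abs_mul]
      exact mul_le_mul h1 (hbdd k ω) (abs_nonneg _) (hc k)
    have hW2int : Integrable (fun ω => W k ω ^ 2) P := by
      have e : (fun ω => W k ω ^ 2) = fun ω => W k ω * W k ω := by funext ω; ring
      rw [e]
      refine my_integrable_of_ae_bdd (hWsm'.mul hWsm').aestronglyMeasurable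
        (C := c k * c k) ?_
      filter_upwards [hWbdd k] with ω h1
      rw [abs_mul]
      exact mul_le_mul h1 h1 (abs_nonneg _) (hc k)
    have hWZ : ∫ ω, W k ω * Z k ω ∂P = ∫ ω, W k ω * W k ω ∂P :=
      my_integral_mul_condexp_eq (ℱ.le (k - 1)) (hWsm k) hWZint (hZint k hk)
    have hexp : ∀ ω, V k ω ^ 2 = Z k ω ^ 2 - 2 * (W k ω * Z k ω) + W k ω * W k ω := by
      intro ω; rw [hV]; ring
    have iWZ : Integrable (fun ω => W k ω * Z k ω) P := hWZint
    have iWW : Integrable (fun ω => W k ω * W k ω) P := by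
      have e : (fun ω => W k ω * W k ω) = fun ω => W k ω ^ 2 := by funext ω; ring
      rw [e]; exact hW2int
    have i2 : Integrable (fun ω => 2 * (W k ω * Z k ω)) P := iWZ.const_mul 2
    have i1 : Integrable (fun ω => Z k ω ^ 2 - 2 * (W k ω * Z k ω)) P := (hZ2int k hk).sub i2
    have hint1 : ∫ ω, V k ω ^ 2 ∂P
        = ∫ ω, Z k ω ^ 2 ∂P - 2 * ∫ ω, W k ω * Z k ω ∂P + ∫ ω, W k ω * W k ω ∂P := by
      rw [show (fun ω => V k ω ^ 2)
          = fun ω => (Z k ω ^ 2 - 2 * (W k ω * Z k ω)) + W k ω * W k ω by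
        funext ω; rw [hexp ω]]
      rw [integral_add i1 iWW, integral_sub (hZ2int k hk) i2, integral_const_mul]
    rw [hint1, hWZ]
    have hW2nn : 0 ≤ ∫ ω, W k ω * W k ω ∂P :=
      integral_nonneg fun ω => mul_self_nonneg _
    linarith
  -- L² bound by induction
  have hL2 : ∀ n, ∫ ω, M n ω ^ 2 ∂P
      ≤ ∑ k ∈ Finset.Icc 1 n, (∫ ω, Z k ω ^ 2 ∂P) / (k : ℝ) ^ 2 := by
    intro n
    induction n with
    | zero => simp [hM]
    | succ n ih =>
      have hMsm : StronglyMeasurable (M n) := (hadap n).mono (ℱ.le n)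
      have hVsm' : StronglyMeasurable (V (n + 1)) := (hVsm (n + 1) (by omega)).mono (ℱ.le (n + 1))
      have hM2int : Integrable (fun ω => M n ω ^ 2) P := by
        have e : (fun ω => M n ω ^ 2) = fun ω => M n ω * M n ω := by funext ω; ring
        rw [e]
        refine my_integrable_of_ae_bdd (hMsm.mul hMsm).aestronglyMeasurable
          (C := (∑ k ∈ Finset.Icc 1 n, 2 * c k) ^ 2) ?_
        filter_upwards [hMbdd n] with ω h1
        rw [abs_mul]
        nlinarith [abs_nonneg (M n ω)]
      have hMVint : Integrable (fun ω => M n ω * V (n + 1) ω) P := by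
        refine my_integrable_of_ae_bdd (hMsm.mul hVsm').aestronglyMeasurable
          (C := (∑ k ∈ Finset.Icc 1 n, 2 * c k) * (2 * c (n + 1))) ?_
        filter_upwards [hMbdd n, hVbdd (n + 1)] with ω h1 h2
        rw [abs_mul]
        exact mul_le_mul h1 h2 (abs_nonneg _) ((abs_nonneg _).trans h1)
      have hV2int : Integrable (fun ω => V (n + 1) ω ^ 2) P := by
        have e : (fun ω => V (n + 1) ω ^ 2) = fun ω => V (n + 1) ω * V (n + 1) ω := by
          funext ω; ring
        rw [e]
        refine my_integrable_of_ae_bdd (hVsm'.mul hVsm').aestronglyMeasurable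
          (C := (2 * c (n + 1)) * (2 * c (n + 1))) ?_
        filter_upwards [hVbdd (n + 1)] with ω h1
        rw [abs_mul]
        exact mul_le_mul h1 h1 (abs_nonneg _) (by linarith [hc (n + 1)])
      have hexp : ∫ ω, M (n + 1) ω ^ 2 ∂P
          = ∫ ω, M n ω ^ 2 ∂P + 2 * (n + 1 : ℝ)⁻¹ * ∫ ω, M n ω * V (n + 1) ω ∂P
            + ((n + 1 : ℝ)⁻¹) ^ 2 * ∫ ω, V (n + 1) ω ^ 2 ∂P := by
        have e : (fun ω => M (n + 1) ω ^ 2)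
            = fun ω => (M n ω ^ 2 + 2 * (n + 1 : ℝ)⁻¹ * (M n ω * V (n + 1) ω))
              + ((n + 1 : ℝ)⁻¹) ^ 2 * V (n + 1) ω ^ 2 := by
          funext ω; rw [hMsucc n ω]; ring
        have j2 : Integrable (fun ω => 2 * (↑n + 1 : ℝ)⁻¹ * (M n ω * V (n + 1) ω)) P :=
          hMVint.const_mul _
        have j3 : Integrable (fun ω => ((↑n + 1 : ℝ)⁻¹) ^ 2 * V (n + 1) ω ^ 2) P :=
          hV2int.const_mul _
        have j1 : Integrable
            (fun ω => M n ω ^ 2 + 2 * (↑n + 1 : ℝ)⁻¹ * (M n ω * V (n + 1) ω)) P :=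
          hM2int.add j2
        rw [e, integral_add j1 j3, integral_add hM2int j2, integral_const_mul,
          integral_const_mul]
      rw [hexp, hMVzero n]
      rw [Finset.sum_Icc_succ_top (show 1 ≤ n + 1 by omega)]
      have h1 : ((n + 1 : ℝ)⁻¹) ^ 2 * ∫ ω, V (n + 1) ω ^ 2 ∂P
          ≤ (∫ ω, Z (n + 1) ω ^ 2 ∂P) / ((n + 1 : ℕ) : ℝ) ^ 2 := by
        push_cast
        rw [div_eq_inv_mul, ← inv_pow]
        refine mul_le_mul_of_nonneg_left (hVsq (n + 1) (by omega)) (by positivity)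
      simp only [mul_zero, add_zero]
      linarith
  -- L¹ bound
  have hSnn : (0:ℝ) ≤ S := le_trans (by simp) (hsum 0)
  have hL1 : ∀ n, eLpNorm (M n) 1 P ≤ ENNReal.ofReal ((S + 1) / 2) := by
    intro n
    have hM2int : Integrable (fun ω => M n ω ^ 2) P := by
      have e : (fun ω => M n ω ^ 2) = fun ω => M n ω * M n ω := by funext ω; ring
      have hMsm : StronglyMeasurable (M n) := (hadap n).mono (ℱ.le n)
      rw [e]
      refine my_integrable_of_ae_bdd (hMsm.mul hMsm).aestronglyMeasurable
        (C := (∑ k ∈ Finset.Icc 1 n, 2 * c k) ^ 2) ?_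
      filter_upwards [hMbdd n] with ω h1
      rw [abs_mul]
      nlinarith [abs_nonneg (M n ω)]
    have habs : ∫ ω, |M n ω| ∂P ≤ (S + 1) / 2 := by
      have h1 : ∫ ω, |M n ω| ∂P ≤ ∫ ω, (M n ω ^ 2 + 1) / 2 ∂P := by
        refine integral_mono (hMint n).abs ((hM2int.add (integrable_const 1)).div_const 2)
          fun ω => ?_
        nlinarith [sq_nonneg (|M n ω| - 1), sq_abs (M n ω)]
      have h2 : ∫ ω, (M n ω ^ 2 + 1) / 2 ∂P = ((∫ ω, M n ω ^ 2 ∂P) + 1) / 2 := by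
        rw [integral_div, integral_add hM2int (integrable_const 1)]
        simp
      have h3 := (hL2 n).trans (hsum n)
      rw [h2] at h1
      linarith
    have heq : eLpNorm (M n) 1 P = ENNReal.ofReal (∫ ω, ‖M n ω‖ ∂P) := by
      rw [eLpNorm_one_eq_lintegral_enorm,
        ofReal_integral_norm_eq_lintegral_enorm (hMint n)]
    rw [heq]
    refine ENNReal.ofReal_le_ofReal ?_
    simpa [Real.norm_eq_abs] using habs
  -- martingale convergence
  have hconv := hmart.submartingale.exists_ae_tendsto_of_bdd
    (R := ((S + 1) / 2).toNNReal) (fun n => by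
      simpa [ENNReal.ofReal] using hL1 n)
  filter_upwards [hconv] with ω hc0
  obtain ⟨c0, hc0⟩ := hc0
  have : Tendsto (fun n => ∑ k ∈ Finset.Icc 1 n, V k ω / k) atTop (𝓝 c0) := by
    refine hc0.congr fun n => ?_
    refine Finset.sum_congr rfl fun k _ => ?_
    rw [div_eq_inv_mul]
  exact my_kronecker this

lemma my_inv_sq_sum_bound (n : ℕ) : ∑ k ∈ Finset.Icc 1 n, ((k : ℝ) ^ 2)⁻¹ ≤ 2 := by
  have he : Finset.Icc 1 n = Finset.Ioo 0 (n + 1) := by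
    ext k; simp [Finset.mem_Icc, Finset.mem_Ioo]; omega
  rw [he]
  have := sum_Ioo_inv_sq_le (α := ℝ) 0 (n + 1)
  simpa using this

lemma my_truncation_sq_sum_bound {x : ℝ} (hx : 0 ≤ x) (n : ℕ) :
    ∑ k ∈ Finset.Icc 1 n, (max 0 (min x (k : ℝ))) ^ 2 / (k : ℝ) ^ 2 ≤ 3 * x + 1 := by
  set K := Nat.ceil x with hK
  have hxK : x ≤ (K : ℝ) := Nat.le_ceil x
  have hKx : (K : ℝ) ≤ x + 1 := le_of_lt (Nat.ceil_lt_add_one hx)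
  rw [← Finset.sum_filter_add_sum_filter_not (Finset.Icc 1 n) (fun k => k ≤ K)]
  have h1 : ∑ k ∈ (Finset.Icc 1 n).filter (fun k => k ≤ K),
      (max 0 (min x (k : ℝ))) ^ 2 / (k : ℝ) ^ 2 ≤ (K : ℝ) := by
    calc ∑ k ∈ (Finset.Icc 1 n).filter (fun k => k ≤ K),
        (max 0 (min x (k : ℝ))) ^ 2 / (k : ℝ) ^ 2
        ≤ ∑ _k ∈ (Finset.Icc 1 n).filter (fun k => k ≤ K), (1 : ℝ) := by
          refine Finset.sum_le_sum fun k hk => ?_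
          rw [Finset.mem_filter, Finset.mem_Icc] at hk
          have hk1 : 1 ≤ k := hk.1.1
          have hkpos : (0 : ℝ) < (k : ℝ) ^ 2 := by positivity
          rw [div_le_one hkpos]
          have h0 : max 0 (min x (k : ℝ)) ≤ (k : ℝ) := by
            refine max_le (by positivity) ?_
            exact min_le_right _ _
          exact pow_le_pow_left₀ (le_max_left _ _) h0 2
      _ = ((Finset.Icc 1 n).filter (fun k => k ≤ K)).card := by
          rw [Finset.sum_const]; simp
      _ ≤ (K : ℝ) := by
          have hsub : (Finset.Icc 1 n).filter (fun k => k ≤ K) ⊆ Finset.Icc 1 K := by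
            intro k hk
            rw [Finset.mem_filter, Finset.mem_Icc] at hk
            exact Finset.mem_Icc.mpr ⟨hk.1.1, hk.2⟩
          have := Finset.card_le_card hsub
          rw [Nat.card_Icc] at this
          exact_mod_cast this.trans (by omega)
  have h2 : ∑ k ∈ (Finset.Icc 1 n).filter (fun k => ¬ k ≤ K),
      (max 0 (min x (k : ℝ))) ^ 2 / (k : ℝ) ^ 2 ≤ 2 * x := by
    calc ∑ k ∈ (Finset.Icc 1 n).filter (fun k => ¬ k ≤ K),
        (max 0 (min x (k : ℝ))) ^ 2 / (k : ℝ) ^ 2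
        ≤ ∑ k ∈ (Finset.Icc 1 n).filter (fun k => ¬ k ≤ K), x ^ 2 * ((k : ℝ) ^ 2)⁻¹ := by
          refine Finset.sum_le_sum fun k hk => ?_
          rw [div_eq_mul_inv]
          have hkpos : (0 : ℝ) ≤ ((k : ℝ) ^ 2)⁻¹ := by positivity
          refine mul_le_mul_of_nonneg_right ?_ hkpos
          have h0 : max 0 (min x (k : ℝ)) ≤ x := max_le hx (min_le_left _ _)
          exact pow_le_pow_left₀ (le_max_left _ _) h0 2
      _ = x ^ 2 * ∑ k ∈ (Finset.Icc 1 n).filter (fun k => ¬ k ≤ K), ((k : ℝ) ^ 2)⁻¹ := by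
          rw [Finset.mul_sum]
      _ ≤ x ^ 2 * (2 / ((K : ℝ) + 1)) := by
          refine mul_le_mul_of_nonneg_left ?_ (by positivity)
          have hsub : (Finset.Icc 1 n).filter (fun k => ¬ k ≤ K) ⊆ Finset.Ioo K (n + 1) := by
            intro k hk
            rw [Finset.mem_filter, Finset.mem_Icc] at hk
            rw [Finset.mem_Ioo]
            omega
          have hle : ∑ k ∈ (Finset.Icc 1 n).filter (fun k => ¬ k ≤ K), ((k : ℝ) ^ 2)⁻¹
              ≤ ∑ k ∈ Finset.Ioo K (n + 1), ((k : ℝ) ^ 2)⁻¹ :=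
            Finset.sum_le_sum_of_subset_of_nonneg hsub (fun k _ _ => by positivity)
          refine hle.trans ?_
          have := sum_Ioo_inv_sq_le (α := ℝ) K (n + 1)
          simpa using this
      _ ≤ 2 * x := by
          have hKpos : (0 : ℝ) < (K : ℝ) + 1 := by positivity
          rw [div_eq_mul_inv, ← mul_assoc]
          rw [show x ^ 2 * 2 * ((K : ℝ) + 1)⁻¹ = (x ^ 2 * 2) / ((K : ℝ) + 1) by ring]
          rw [div_le_iff₀ hKpos]
          nlinarith
  linarith

lemma my_indicator_count_bound {x : ℝ} (hx : 0 ≤ x) (n : ℕ) :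
    ∑ k ∈ Finset.Icc 1 n, (Set.Ioi (k : ℝ)).indicator (fun _ => (1 : ℝ)) x ≤ x := by
  have he : ∀ k : ℕ, (Set.Ioi (k : ℝ)).indicator (fun _ => (1 : ℝ)) x
      = if (k : ℝ) < x then (1 : ℝ) else 0 := by
    intro k
    rw [Set.indicator_apply]
    simp [Set.mem_Ioi]
  calc ∑ k ∈ Finset.Icc 1 n, (Set.Ioi (k : ℝ)).indicator (fun _ => (1 : ℝ)) x
      = ∑ k ∈ Finset.Icc 1 n, if (k : ℝ) < x then (1 : ℝ) else 0 :=
        Finset.sum_congr rfl fun k _ => he k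
    _ = ((Finset.Icc 1 n).filter (fun k : ℕ => (k : ℝ) < x)).card := by
        rw [Finset.sum_boole]
    _ ≤ x := by
        have hsub : (Finset.Icc 1 n).filter (fun k : ℕ => (k : ℝ) < x) ⊆ Finset.Icc 1 (Nat.floor x) := by
          intro k hk
          rw [Finset.mem_filter, Finset.mem_Icc] at hk
          refine Finset.mem_Icc.mpr ⟨hk.1.1, Nat.le_floor hk.2.le⟩
        have h1 := Finset.card_le_card hsub
        rw [Nat.card_Icc] at h1
        have h2 : (((Finset.Icc 1 n).filter (fun k : ℕ => (k : ℝ) < x)).card : ℝ) ≤ (Nat.floor x : ℝ) := by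
          exact_mod_cast h1.trans (by omega)
        exact h2.trans (Nat.floor_le hx)

end Helpers

/-- Guo's law of large numbers under sandwiched conditional laws
(Lemma 9 of Guo (2014)): if the conditional law of `X_{n+1}` given `X_1,…,X_n`
has density w.r.t. `μ` bounded between `a` and `a⁻¹` (and similarly for the law
of `X_1`), then a.s. `a m_μ ≤ liminf (1/n)∑ X_k ≤ limsup (1/n)∑ X_k ≤ a⁻¹ m_μ`. -/
theorem lln_sandwiched_conditional_laws
    {Ω : Type*} [MeasurableSpace Ω] (P : Measure Ω) [IsProbabilityMeasure P]
    (μ : Measure ℝ) [IsProbabilityMeasure μ]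
    (hμnn : ∀ᵐ x ∂μ, 0 ≤ x) (hμmean : Integrable id μ)
    (a : ℝ) (ha : a ∈ Set.Ioo (0 : ℝ) 1)
    (X : ℕ → Ω → ℝ) (hXm : ∀ n, Measurable (X n)) (hXnn : ∀ n ω, 0 ≤ X n ω)
    (hX1 : ∀ f : ℝ → ℝ, Measurable f → (∀ x, 0 ≤ f x) → (∃ B, ∀ x, f x ≤ B) →
      a * ∫ x, f x ∂μ ≤ ∫ ω, f (X 1 ω) ∂P ∧
      ∫ ω, f (X 1 ω) ∂P ≤ a⁻¹ * ∫ x, f x ∂μ)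
    (hcond : ∀ n : ℕ, 1 ≤ n → ∀ f : ℝ → ℝ, Measurable f → (∀ x, 0 ≤ f x) →
      (∃ B, ∀ x, f x ≤ B) →
      ∀ᵐ ω ∂P,
        a * ∫ x, f x ∂μ ≤
          (P[fun ω' => f (X (n + 1) ω') |
            ⨆ k ∈ Finset.Icc 1 n, MeasurableSpace.comap (X k) inferInstance]) ω ∧
        (P[fun ω' => f (X (n + 1) ω') |
            ⨆ k ∈ Finset.Icc 1 n, MeasurableSpace.comap (X k) inferInstance]) ω ≤
          a⁻¹ * ∫ x, f x ∂μ) :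
    ∀ᵐ ω ∂P,
      a * (∫ x, x ∂μ) ≤
        liminf (fun n : ℕ => (∑ k ∈ Finset.Icc 1 n, X k ω) / n) atTop ∧
      limsup (fun n : ℕ => (∑ k ∈ Finset.Icc 1 n, X k ω) / n) atTop ≤
        a⁻¹ * ∫ x, x ∂μ := by
  obtain ⟨ha0, ha1⟩ := ha
  -- the filtration
  set ℱ : Filtration ℕ ‹MeasurableSpace Ω› :=
    { seq := fun n => ⨆ k ∈ Finset.Icc 1 n, MeasurableSpace.comap (X k) inferInstance
      mono' := fun i j hij => by
        refine biSup_mono fun k hk => ?_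
        exact Finset.Icc_subset_Icc_right hij hk
      le' := fun n => by
        refine iSup₂_le fun k _ => ?_
        exact measurable_iff_comap_le.mp (hXm k) } with hFdef
  have hℱn : ∀ n : ℕ, ℱ n = ⨆ k ∈ Finset.Icc 1 n, MeasurableSpace.comap (X k) inferInstance :=
    fun n => rfl
  have hℱ0 : ℱ 0 = (⊥ : MeasurableSpace Ω) := by
    rw [hℱn 0, Finset.Icc_eq_empty (by omega)]
    simp
  -- measurability transfer
  have hXsm : ∀ k, 1 ≤ k → ∀ g : ℝ → ℝ, Measurable g →
      StronglyMeasurable[ℱ k] fun ω => g (X k ω) := by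
    intro k hk g hg
    have h1 : Measurable[MeasurableSpace.comap (X k) inferInstance] (X k) :=
      measurable_iff_comap_le.mpr le_rfl
    have h2 : MeasurableSpace.comap (X k) inferInstance ≤ ℱ k := by
      rw [hℱn k]
      exact le_biSup (fun k => MeasurableSpace.comap (X k) inferInstance)
        (Finset.mem_Icc.mpr ⟨hk, le_refl k⟩)
    exact ((hg.comp h1).mono h2 le_rfl).stronglyMeasurable
  -- the bridge to hcond / hX1
  have bridge : ∀ g : ℝ → ℝ, Measurable g → (∀ x, 0 ≤ g x) → (∃ B, ∀ x, g x ≤ B) →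
      ∀ k : ℕ, 1 ≤ k →
      ∀ᵐ ω ∂P, a * ∫ x, g x ∂μ ≤ (P[fun ω' => g (X k ω')|ℱ (k - 1)]) ω ∧
        (P[fun ω' => g (X k ω')|ℱ (k - 1)]) ω ≤ a⁻¹ * ∫ x, g x ∂μ := by
    intro g hg hg0 hgB k hk
    match k, hk with
    | 1, _ =>
      have h0 : ℱ (1 - 1) = (⊥ : MeasurableSpace Ω) := hℱ0
      rw [h0, condExp_bot]
      exact ae_of_all _ fun ω => hX1 g hg hg0 hgB
    | (n + 2), _ =>
      have h := hcond (n + 1) (by omega) g hg hg0 hgB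
      have h0 : ℱ (n + 2 - 1)
          = ⨆ k ∈ Finset.Icc 1 (n + 1), MeasurableSpace.comap (X k) inferInstance := rfl
      rw [h0]
      exact h
  -- tower property
  have tower : ∀ g : ℝ → ℝ, Measurable g → (∀ x, 0 ≤ g x) → (∃ B, ∀ x, g x ≤ B) →
      ∀ k : ℕ, 1 ≤ k →
      a * ∫ x, g x ∂μ ≤ ∫ ω, g (X k ω) ∂P ∧ ∫ ω, g (X k ω) ∂P ≤ a⁻¹ * ∫ x, g x ∂μ := by
    intro g hg hg0 hgB k hk
    obtain ⟨B, hB⟩ := hgB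
    have hint : Integrable (fun ω => g (X k ω)) P := by
      refine (integrable_const B).mono' (hg.comp (hXm k)).aestronglyMeasurable
        (ae_of_all _ fun ω => ?_)
      rw [Real.norm_eq_abs, abs_of_nonneg (hg0 _)]
      exact hB _
    have heq : ∫ ω, g (X k ω) ∂P = ∫ ω, (P[fun ω' => g (X k ω')|ℱ (k - 1)]) ω ∂P :=
      (integral_condExp (ℱ.le (k - 1))).symm
    have hb := bridge g hg hg0 ⟨B, hB⟩ k hk
    constructor
    · have h1 : ∫ ω, (fun _ : Ω => a * ∫ x, g x ∂μ) ω ∂P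
          ≤ ∫ ω, (P[fun ω' => g (X k ω')|ℱ (k - 1)]) ω ∂P := by
        refine integral_mono_ae (integrable_const _) integrable_condExp ?_
        filter_upwards [hb] with ω h using h.1
      rw [heq]
      simpa using h1
    · have h1 : ∫ ω, (P[fun ω' => g (X k ω')|ℱ (k - 1)]) ω ∂P
          ≤ ∫ ω, (fun _ : Ω => a⁻¹ * ∫ x, g x ∂μ) ω ∂P := by
        refine integral_mono_ae integrable_condExp (integrable_const _) ?_
        filter_upwards [hb] with ω h using h.2
      rw [heq]
      simpa using h1
  -- basic μ facts
  set mμ := ∫ x, x ∂μ with hmμ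
  have hmnn : 0 ≤ mμ := integral_nonneg_of_ae hμnn
  have hμid : Integrable (fun x : ℝ => x) μ := hμmean
  have hainv : (0:ℝ) < a⁻¹ := by positivity
  have hgmeas : ∀ T : ℝ, Measurable fun x : ℝ => max 0 (min x T) :=
    fun T => measurable_const.max (measurable_id.min measurable_const)
  have hg0 : ∀ (T x : ℝ), 0 ≤ max 0 (min x T) := fun T x => le_max_left _ _
  have hgB : ∀ (T x : ℝ), max 0 (min x T) ≤ max 0 T :=
    fun T x => max_le (le_max_left _ _) ((min_le_right _ _).trans (le_max_right _ _))
  have hgle : ∀ (T : ℝ) {x : ℝ}, 0 ≤ x → max 0 (min x T) ≤ x :=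
    fun T x hx => max_le hx (min_le_left _ _)
  have hgintμ : ∀ T : ℝ, Integrable (fun x => max 0 (min x T)) μ := by
    intro T
    refine (integrable_const (max 0 T)).mono' (hgmeas T).aestronglyMeasurable
      (ae_of_all _ fun x => ?_)
    rw [Real.norm_eq_abs, abs_of_nonneg (hg0 T x)]
    exact hgB T x
  have hgsqintμ : ∀ T : ℝ, Integrable (fun x => (max 0 (min x T)) ^ 2) μ := by
    intro T
    refine (integrable_const ((max 0 T) ^ 2)).mono'
      ((hgmeas T).pow_const 2).aestronglyMeasurable (ae_of_all _ fun x => ?_)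
    rw [Real.norm_eq_abs, abs_of_nonneg (sq_nonneg _)]
    exact pow_le_pow_left₀ (hg0 T x) (hgB T x) 2
  have hIle : ∀ T : ℝ, ∫ x, max 0 (min x T) ∂μ ≤ mμ := by
    intro T
    refine integral_mono_ae (hgintμ T) hμid ?_
    filter_upwards [hμnn] with x hx using hgle T hx
  -- UPPER BOUND machinery : Z k = max 0 (min (X k) k)
  have hup2 : ∀ k : ℕ, 1 ≤ k → ∫ ω, (max 0 (min (X k ω) (k:ℝ))) ^ 2 ∂P
      ≤ a⁻¹ * ∫ x, (max 0 (min x (k:ℝ))) ^ 2 ∂μ := by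
    intro k hk
    exact (tower (fun x => (max 0 (min x (k:ℝ))) ^ 2)
      ((hgmeas _).pow_const 2) (fun x => sq_nonneg _)
      ⟨(max 0 (k:ℝ)) ^ 2, fun x => pow_le_pow_left₀ (hg0 _ _) (hgB _ x) 2⟩ k hk).2
  have hsum_up : ∀ n : ℕ, ∑ k ∈ Finset.Icc 1 n,
      (∫ ω, (max 0 (min (X k ω) (k:ℝ))) ^ 2 ∂P) / (k:ℝ) ^ 2 ≤ a⁻¹ * (3 * mμ + 1) := by
    intro n
    have s1 : ∑ k ∈ Finset.Icc 1 n, (∫ ω, (max 0 (min (X k ω) (k:ℝ))) ^ 2 ∂P) / (k:ℝ) ^ 2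
        ≤ ∑ k ∈ Finset.Icc 1 n, a⁻¹ * ((∫ x, (max 0 (min x (k:ℝ))) ^ 2 ∂μ) / (k:ℝ) ^ 2) := by
      refine Finset.sum_le_sum fun k hk => ?_
      rw [Finset.mem_Icc] at hk
      rw [← mul_div_assoc]
      gcongr
      exact hup2 k hk.1
    have s2 : ∑ k ∈ Finset.Icc 1 n, a⁻¹ * ((∫ x, (max 0 (min x (k:ℝ))) ^ 2 ∂μ) / (k:ℝ) ^ 2)
        = a⁻¹ * ∫ x, ∑ k ∈ Finset.Icc 1 n, (max 0 (min x (k:ℝ))) ^ 2 / (k:ℝ) ^ 2 ∂μ := by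
      rw [← Finset.mul_sum]
      congr 1
      simp_rw [← integral_div]
      exact (integral_finset_sum (Finset.Icc 1 n)
        (fun (k : ℕ) _ => (hgsqintμ (k:ℝ)).div_const ((k:ℝ) ^ 2))).symm
    have s3 : ∫ x, ∑ k ∈ Finset.Icc 1 n, (max 0 (min x (k:ℝ))) ^ 2 / (k:ℝ) ^ 2 ∂μ
        ≤ 3 * mμ + 1 := by
      have h4 : ∫ x, (3 * x + 1 : ℝ) ∂μ = 3 * mμ + 1 := by
        rw [integral_add (hμid.const_mul 3) (integrable_const 1), integral_const_mul]
        simp [hmμ]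
      rw [← h4]
      refine integral_mono_ae
        (integrable_finset_sum _ (fun k _ => (hgsqintμ (k:ℝ)).div_const _))
        ((hμid.const_mul 3).add (integrable_const 1)) ?_
      filter_upwards [hμnn] with x hx
      exact my_truncation_sq_sum_bound hx n
    calc ∑ k ∈ Finset.Icc 1 n, (∫ ω, (max 0 (min (X k ω) (k:ℝ))) ^ 2 ∂P) / (k:ℝ) ^ 2
        ≤ a⁻¹ * ∫ x, ∑ k ∈ Finset.Icc 1 n, (max 0 (min x (k:ℝ))) ^ 2 / (k:ℝ) ^ 2 ∂μ :=
          s1.trans_eq s2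
      _ ≤ a⁻¹ * (3 * mμ + 1) := by
          exact mul_le_mul_of_nonneg_left s3 hainv.le
  have hup_lln := lemmaA (P := P) ℱ (fun k ω => max 0 (min (X k ω) (k:ℝ)))
    (fun k hk => hXsm k hk _ (hgmeas (k:ℝ))) (fun k => (k:ℝ)) (fun k => Nat.cast_nonneg k)
    (fun k ω => by
      rw [abs_of_nonneg (hg0 _ _)]
      exact max_le (Nat.cast_nonneg k) (min_le_right _ _))
    (a⁻¹ * (3 * mμ + 1)) hsum_up
  have hWup : ∀ᵐ ω ∂P, ∀ k : ℕ, 1 ≤ k →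
      (P[(fun ω' => max 0 (min (X k ω') (k:ℝ)))|ℱ (k - 1)]) ω ≤ a⁻¹ * mμ := by
    refine ae_all_iff.2 fun k => ?_
    by_cases hk : 1 ≤ k
    · filter_upwards [bridge (fun x => max 0 (min x (k:ℝ))) (hgmeas _) (hg0 _)
        ⟨max 0 (k:ℝ), hgB _⟩ k hk] with ω h hk'
      exact h.2.trans (mul_le_mul_of_nonneg_left (hIle _) hainv.le)
    · exact ae_of_all _ fun ω h' => absurd h' hk
  -- Borel–Cantelli: eventually X k ≤ k
  have hind_meas : ∀ k : ℕ, Measurable ((Set.Ioi (k:ℝ)).indicator (fun _ => (1:ℝ))) :=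
    fun k => measurable_const.indicator measurableSet_Ioi
  have hind01 : ∀ (k : ℕ) (x : ℝ), 0 ≤ (Set.Ioi (k:ℝ)).indicator (fun _ => (1:ℝ)) x ∧
      (Set.Ioi (k:ℝ)).indicator (fun _ => (1:ℝ)) x ≤ 1 := by
    intro k x
    rw [Set.indicator_apply]
    split <;> norm_num
  have hindμ : ∀ k : ℕ, ∫ x, (Set.Ioi (k:ℝ)).indicator (fun _ => (1:ℝ)) x ∂μ
      = (μ (Set.Ioi (k:ℝ))).toReal := by
    intro k
    rw [integral_indicator_const (1:ℝ) measurableSet_Ioi]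
    simp [Measure.real]
  have hindP : ∀ k : ℕ, ∫ ω, (Set.Ioi (k:ℝ)).indicator (fun _ => (1:ℝ)) (X k ω) ∂P
      = (P {ω | (k:ℝ) < X k ω}).toReal := by
    intro k
    have he : (fun ω => (Set.Ioi (k:ℝ)).indicator (fun _ => (1:ℝ)) (X k ω))
        = ((X k) ⁻¹' (Set.Ioi (k:ℝ))).indicator (fun _ => (1:ℝ)) := by
      classical
      funext ω
      rw [Set.indicator_apply, Set.indicator_apply]
      simp [Set.mem_preimage]
    rw [he, integral_indicator_const (1:ℝ) (hXm k measurableSet_Ioi)]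
    have : (X k) ⁻¹' (Set.Ioi (k:ℝ)) = {ω | (k:ℝ) < X k ω} := rfl
    rw [this]; simp [Measure.real]
  have hPA : ∀ k : ℕ, 1 ≤ k →
      (P {ω | (k:ℝ) < X k ω}).toReal ≤ a⁻¹ * (μ (Set.Ioi (k:ℝ))).toReal := by
    intro k hk
    have ht := (tower ((Set.Ioi (k:ℝ)).indicator (fun _ => (1:ℝ))) (hind_meas k)
      (fun x => (hind01 k x).1) ⟨1, fun x => (hind01 k x).2⟩ k hk).2
    rw [hindP k, hindμ k] at ht
    exact ht
  have hμIoi_sum : ∀ N : ℕ, ∑ k ∈ Finset.Icc 1 N, (μ (Set.Ioi (k:ℝ))).toReal ≤ mμ := by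
    intro N
    have h1 : ∑ k ∈ Finset.Icc 1 N, (μ (Set.Ioi (k:ℝ))).toReal
        = ∫ x, ∑ k ∈ Finset.Icc 1 N, (Set.Ioi (k:ℝ)).indicator (fun _ => (1:ℝ)) x ∂μ := by
      rw [integral_finset_sum (Finset.Icc 1 N)
        (fun (k : ℕ) _ => (integrable_const (1:ℝ)).indicator measurableSet_Ioi)]
      exact (Finset.sum_congr rfl fun k _ => (hindμ k).symm)
    rw [h1]
    refine integral_mono_ae (integrable_finset_sum _
      (fun (k : ℕ) _ => (integrable_const (1:ℝ)).indicator measurableSet_Ioi)) hμid ?_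
    filter_upwards [hμnn] with x hx
    exact my_indicator_count_bound hx N
  have hBC : ∀ᵐ ω ∂P, ∀ᶠ k in atTop, X k ω ≤ (k:ℝ) := by
    have hsummable : (∑' k : ℕ, P {ω | (k:ℝ) < X k ω}) ≠ ⊤ := by
      refine ne_top_of_le_ne_top (b := ENNReal.ofReal (1 + a⁻¹ * mμ)) ENNReal.ofReal_ne_top ?_
      refine ENNReal.tsum_le_of_sum_range_le fun N => ?_
      have heq : ∑ k ∈ Finset.range N, P {ω | (k:ℝ) < X k ω}
          = ENNReal.ofReal (∑ k ∈ Finset.range N, (P {ω | (k:ℝ) < X k ω}).toReal) := by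
        rw [ENNReal.ofReal_sum_of_nonneg (fun _ _ => ENNReal.toReal_nonneg)]
        exact Finset.sum_congr rfl fun k _ => (ENNReal.ofReal_toReal (measure_ne_top P _)).symm
      rw [heq]
      refine ENNReal.ofReal_le_ofReal ?_
      have hsub : Finset.range N ⊆ insert 0 (Finset.Icc 1 N) := by
        intro k hk
        rw [Finset.mem_range] at hk
        rcases Nat.eq_zero_or_pos k with h | h
        · simp [h]
        · exact Finset.mem_insert_of_mem (Finset.mem_Icc.mpr ⟨h, by omega⟩)
      have h2 : ∑ k ∈ Finset.range N, (P {ω | (k:ℝ) < X k ω}).toReal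
          ≤ ∑ k ∈ insert 0 (Finset.Icc 1 N), (P {ω | (k:ℝ) < X k ω}).toReal :=
        Finset.sum_le_sum_of_subset_of_nonneg hsub (fun _ _ _ => ENNReal.toReal_nonneg)
      rw [Finset.sum_insert (by simp)] at h2
      have h3 : (P {ω | (0:ℕ) < X 0 ω}).toReal ≤ 1 := by
        have := prob_le_one (μ := P) (s := {ω | ((0:ℕ):ℝ) < X 0 ω})
        exact ENNReal.toReal_le_of_le_ofReal zero_le_one (by simpa using this)
      have h4 : ∑ k ∈ Finset.Icc 1 N, (P {ω | (k:ℝ) < X k ω}).toReal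
          ≤ a⁻¹ * mμ := by
        calc ∑ k ∈ Finset.Icc 1 N, (P {ω | (k:ℝ) < X k ω}).toReal
            ≤ ∑ k ∈ Finset.Icc 1 N, a⁻¹ * (μ (Set.Ioi (k:ℝ))).toReal :=
              Finset.sum_le_sum fun k hk => hPA k (Finset.mem_Icc.mp hk).1
          _ = a⁻¹ * ∑ k ∈ Finset.Icc 1 N, (μ (Set.Ioi (k:ℝ))).toReal := by
              rw [Finset.mul_sum]
          _ ≤ a⁻¹ * mμ := mul_le_mul_of_nonneg_left (hμIoi_sum N) hainv.le
      linarith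
    have := MeasureTheory.ae_eventually_notMem
      (μ := P) (s := fun k : ℕ => {ω | (k:ℝ) < X k ω}) hsummable
    filter_upwards [this] with ω hω
    filter_upwards [hω] with k hk
    simpa [not_lt] using hk
  -- LOWER BOUND machinery
  have hlow_lln : ∀ K : ℕ, ∀ᵐ ω ∂P, Tendsto (fun n : ℕ => (∑ k ∈ Finset.Icc 1 n,
      (max 0 (min (X k ω) (K:ℝ)) -
        (P[(fun ω' => max 0 (min (X k ω') (K:ℝ)))|ℱ (k - 1)]) ω)) / n) atTop (𝓝 0) := by
    intro K
    refine lemmaA (P := P) ℱ (fun k ω => max 0 (min (X k ω) (K:ℝ)))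
      (fun k hk => hXsm k hk _ (hgmeas _)) (fun _ => (K:ℝ)) (fun _ => Nat.cast_nonneg K)
      (fun k ω => by
        rw [abs_of_nonneg (hg0 _ _)]
        exact max_le (Nat.cast_nonneg K) (min_le_right _ _))
      (2 * (K:ℝ) ^ 2) ?_
    intro n
    have hterm : ∀ k, 1 ≤ k → ∫ ω, (max 0 (min (X k ω) (K:ℝ))) ^ 2 ∂P ≤ (K:ℝ) ^ 2 := by
      intro k hk
      have hint : Integrable (fun ω => (max 0 (min (X k ω) (K:ℝ))) ^ 2) P := by
        refine (integrable_const ((K:ℝ) ^ 2)).mono'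
          ((hXsm k hk _ ((hgmeas (K:ℝ)).pow_const 2)).mono (ℱ.le k)).aestronglyMeasurable
          (ae_of_all _ fun ω => ?_)
        rw [Real.norm_eq_abs, abs_of_nonneg (sq_nonneg _)]
        exact pow_le_pow_left₀ (hg0 _ _) (max_le (Nat.cast_nonneg K) (min_le_right _ _)) 2
      calc ∫ ω, (max 0 (min (X k ω) (K:ℝ))) ^ 2 ∂P ≤ ∫ _, (K:ℝ) ^ 2 ∂P :=
            integral_mono hint (integrable_const _) fun ω =>
              pow_le_pow_left₀ (hg0 _ _) (max_le (Nat.cast_nonneg K) (min_le_right _ _)) 2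
        _ = (K:ℝ) ^ 2 := by simp
    calc ∑ k ∈ Finset.Icc 1 n, (∫ ω, (max 0 (min (X k ω) (K:ℝ))) ^ 2 ∂P) / (k:ℝ) ^ 2
        ≤ ∑ k ∈ Finset.Icc 1 n, (K:ℝ) ^ 2 * ((k:ℝ) ^ 2)⁻¹ := by
          refine Finset.sum_le_sum fun k hk => ?_
          rw [Finset.mem_Icc] at hk
          rw [div_eq_mul_inv]
          exact mul_le_mul_of_nonneg_right (hterm k hk.1) (by positivity)
      _ = (K:ℝ) ^ 2 * ∑ k ∈ Finset.Icc 1 n, ((k:ℝ) ^ 2)⁻¹ := by rw [Finset.mul_sum]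
      _ ≤ (K:ℝ) ^ 2 * 2 := mul_le_mul_of_nonneg_left (my_inv_sq_sum_bound n) (by positivity)
      _ = 2 * (K:ℝ) ^ 2 := by ring
  have hWlow : ∀ K : ℕ, ∀ᵐ ω ∂P, ∀ k : ℕ, 1 ≤ k →
      a * ∫ x, max 0 (min x (K:ℝ)) ∂μ ≤
        (P[(fun ω' => max 0 (min (X k ω') (K:ℝ)))|ℱ (k - 1)]) ω := by
    intro K
    refine ae_all_iff.2 fun k => ?_
    by_cases hk : 1 ≤ k
    · filter_upwards [bridge (fun x => max 0 (min x (K:ℝ))) (hgmeas _) (hg0 _)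
        ⟨max 0 (K:ℝ), hgB _⟩ k hk] with ω h hk'
      exact h.1
    · exact ae_of_all _ fun ω h' => absurd h' hk
  have hIKtend : Tendsto (fun K : ℕ => ∫ x, max 0 (min x (K:ℝ)) ∂μ) atTop (𝓝 mμ) := by
    refine integral_tendsto_of_tendsto_of_monotone (fun K => hgintμ (K:ℝ)) hμid ?_ ?_
    · refine ae_of_all _ fun x => ?_
      intro K K' hKK'
      have : (K:ℝ) ≤ (K':ℝ) := Nat.cast_le.mpr hKK'
      exact max_le_max le_rfl (min_le_min le_rfl this)
    · filter_upwards [hμnn] with x hx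
      have hev : ∀ᶠ K : ℕ in atTop, max 0 (min x (K:ℝ)) = x := by
        filter_upwards [eventually_ge_atTop (Nat.ceil x)] with K hK
        have hxK : x ≤ (K:ℝ) := (Nat.le_ceil x).trans (Nat.cast_le.mpr hK)
        rw [min_eq_left hxK, max_eq_right hx]
      have hev' : (fun K : ℕ => max 0 (min x (K:ℝ))) =ᶠ[atTop] (fun _ => x) := hev
      exact Tendsto.congr' hev'.symm tendsto_const_nhds
  -- FINAL ASSEMBLY
  filter_upwards [hup_lln, hWup, hBC, ae_all_iff.2 hlow_lln, ae_all_iff.2 hWlow]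
    with ω hup hWub hBCw hlow hWlb
  have hu_nonneg : ∀ n : ℕ, 0 ≤ (∑ k ∈ Finset.Icc 1 n, X k ω) / n :=
    fun n => div_nonneg (Finset.sum_nonneg fun k _ => hXnn k ω) (Nat.cast_nonneg n)
  have hu_bddge : IsBoundedUnder (· ≥ ·) atTop
      (fun n : ℕ => (∑ k ∈ Finset.Icc 1 n, X k ω) / n) :=
    isBoundedUnder_of ⟨0, fun n => hu_nonneg n⟩
  obtain ⟨N, hN⟩ := eventually_atTop.1 hBCw
  -- upper bound
  set D := ∑ k ∈ Finset.Icc 1 N, (X k ω - max 0 (min (X k ω) (k:ℝ))) with hD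
  have hw : Tendsto (fun n : ℕ => (∑ k ∈ Finset.Icc 1 n,
      (max 0 (min (X k ω) (k:ℝ)) -
        (P[(fun ω' => max 0 (min (X k ω') (k:ℝ)))|ℱ (k - 1)]) ω)) / n
      + D / n + a⁻¹ * mμ) atTop (𝓝 (a⁻¹ * mμ)) := by
    have := (hup.add (tendsto_const_div_atTop_nhds_zero_nat D)).add_const (a⁻¹ * mμ)
    simpa using this
  have hub_ev : ∀ᶠ n in atTop, (∑ k ∈ Finset.Icc 1 n, X k ω) / n
      ≤ (∑ k ∈ Finset.Icc 1 n,
          (max 0 (min (X k ω) (k:ℝ)) -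
            (P[(fun ω' => max 0 (min (X k ω') (k:ℝ)))|ℱ (k - 1)]) ω)) / n
        + D / n + a⁻¹ * mμ := by
    filter_upwards [eventually_ge_atTop (max N 1)] with n hn
    have hn1 : 1 ≤ n := le_trans (le_max_right _ _) hn
    have hnN : N ≤ n := le_trans (le_max_left _ _) hn
    have hnpos : (0:ℝ) < (n:ℝ) := by
      have : 0 < n := hn1
      exact_mod_cast this
    have hXZ : ∑ k ∈ Finset.Icc 1 n, X k ω
        = (∑ k ∈ Finset.Icc 1 n, max 0 (min (X k ω) (k:ℝ))) + D := by
      have h1 : ∑ k ∈ Finset.Icc 1 n, (X k ω - max 0 (min (X k ω) (k:ℝ))) = D := by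
        rw [hD]
        refine (Finset.sum_subset (Finset.Icc_subset_Icc_right hnN) ?_).symm
        · intro k hk1 hk2
          rw [Finset.mem_Icc] at hk1
          rw [Finset.mem_Icc] at hk2
          have hkN : N ≤ k := by omega
          rw [min_eq_left (hN k hkN), max_eq_right (hXnn k ω)]
          ring
      calc ∑ k ∈ Finset.Icc 1 n, X k ω
          = ∑ k ∈ Finset.Icc 1 n, (max 0 (min (X k ω) (k:ℝ))
            + (X k ω - max 0 (min (X k ω) (k:ℝ)))) :=
            Finset.sum_congr rfl fun k _ => by ring
        _ = _ := by rw [Finset.sum_add_distrib, h1]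
    have hZW : ∑ k ∈ Finset.Icc 1 n, max 0 (min (X k ω) (k:ℝ))
        = (∑ k ∈ Finset.Icc 1 n,
            (max 0 (min (X k ω) (k:ℝ)) -
              (P[(fun ω' => max 0 (min (X k ω') (k:ℝ)))|ℱ (k - 1)]) ω))
          + ∑ k ∈ Finset.Icc 1 n,
            (P[(fun ω' => max 0 (min (X k ω') (k:ℝ)))|ℱ (k - 1)]) ω := by
      rw [← Finset.sum_add_distrib]
      exact Finset.sum_congr rfl fun k _ => by ring
    have hWsum : ∑ k ∈ Finset.Icc 1 n,
        (P[(fun ω' => max 0 (min (X k ω') (k:ℝ)))|ℱ (k - 1)]) ω ≤ (n:ℝ) * (a⁻¹ * mμ) := by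
      calc ∑ k ∈ Finset.Icc 1 n,
          (P[(fun ω' => max 0 (min (X k ω') (k:ℝ)))|ℱ (k - 1)]) ω
          ≤ ∑ _k ∈ Finset.Icc 1 n, (a⁻¹ * mμ) :=
            Finset.sum_le_sum fun k hk => hWub k (Finset.mem_Icc.mp hk).1
        _ = (n:ℝ) * (a⁻¹ * mμ) := by
            rw [Finset.sum_const, Nat.card_Icc]
            simp [nsmul_eq_mul]
    rw [hXZ, hZW, add_div, add_div]
    have hBn : (∑ k ∈ Finset.Icc 1 n,
        (P[(fun ω' => max 0 (min (X k ω') (k:ℝ)))|ℱ (k - 1)]) ω) / n ≤ a⁻¹ * mμ := by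
      rw [div_le_iff₀ hnpos]
      linarith
    linarith
  have hu_bddle : IsBoundedUnder (· ≤ ·) atTop
      (fun n : ℕ => (∑ k ∈ Finset.Icc 1 n, X k ω) / n) :=
    hw.isBoundedUnder_le.mono_le hub_ev
  have hlimsup : limsup (fun n : ℕ => (∑ k ∈ Finset.Icc 1 n, X k ω) / n) atTop
      ≤ a⁻¹ * mμ :=
    (limsup_le_limsup hub_ev hu_bddge.isCoboundedUnder_flip
      hw.isBoundedUnder_le).trans hw.limsup_eq.le
  -- lower bound
  have hliminf : ∀ K : ℕ, a * ∫ x, max 0 (min x (K:ℝ)) ∂μ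
      ≤ liminf (fun n : ℕ => (∑ k ∈ Finset.Icc 1 n, X k ω) / n) atTop := by
    intro K
    have hwK : Tendsto (fun n : ℕ => a * ∫ x, max 0 (min x (K:ℝ)) ∂μ
        + (∑ k ∈ Finset.Icc 1 n,
            (max 0 (min (X k ω) (K:ℝ)) -
              (P[(fun ω' => max 0 (min (X k ω') (K:ℝ)))|ℱ (k - 1)]) ω)) / n)
        atTop (𝓝 (a * ∫ x, max 0 (min x (K:ℝ)) ∂μ)) := by
      have := (hlow K).const_add (a * ∫ x, max 0 (min x (K:ℝ)) ∂μ)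
      simpa using this
    have hlb_ev : ∀ᶠ n in atTop, a * ∫ x, max 0 (min x (K:ℝ)) ∂μ
        + (∑ k ∈ Finset.Icc 1 n,
            (max 0 (min (X k ω) (K:ℝ)) -
              (P[(fun ω' => max 0 (min (X k ω') (K:ℝ)))|ℱ (k - 1)]) ω)) / n
        ≤ (∑ k ∈ Finset.Icc 1 n, X k ω) / n := by
      filter_upwards [eventually_ge_atTop 1] with n hn1
      have hnpos : (0:ℝ) < (n:ℝ) := by
        have : 0 < n := hn1
        exact_mod_cast this
      have h1 : ∑ k ∈ Finset.Icc 1 n, max 0 (min (X k ω) (K:ℝ))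
          ≤ ∑ k ∈ Finset.Icc 1 n, X k ω :=
        Finset.sum_le_sum fun k _ => hgle (K:ℝ) (hXnn k ω)
      have h2 : ∑ k ∈ Finset.Icc 1 n, max 0 (min (X k ω) (K:ℝ))
          = (∑ k ∈ Finset.Icc 1 n,
              (max 0 (min (X k ω) (K:ℝ)) -
                (P[(fun ω' => max 0 (min (X k ω') (K:ℝ)))|ℱ (k - 1)]) ω))
            + ∑ k ∈ Finset.Icc 1 n,
              (P[(fun ω' => max 0 (min (X k ω') (K:ℝ)))|ℱ (k - 1)]) ω := by
        rw [← Finset.sum_add_distrib]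
        exact Finset.sum_congr rfl fun k _ => by ring
      have h3 : (n:ℝ) * (a * ∫ x, max 0 (min x (K:ℝ)) ∂μ)
          ≤ ∑ k ∈ Finset.Icc 1 n,
            (P[(fun ω' => max 0 (min (X k ω') (K:ℝ)))|ℱ (k - 1)]) ω := by
        calc (n:ℝ) * (a * ∫ x, max 0 (min x (K:ℝ)) ∂μ)
            = ∑ _k ∈ Finset.Icc 1 n, (a * ∫ x, max 0 (min x (K:ℝ)) ∂μ) := by
              rw [Finset.sum_const, Nat.card_Icc]
              simp [nsmul_eq_mul]
          _ ≤ _ := Finset.sum_le_sum fun k hk => hWlb K k (Finset.mem_Icc.mp hk).1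
      have h4 : (∑ k ∈ Finset.Icc 1 n, max 0 (min (X k ω) (K:ℝ))) / n
          ≤ (∑ k ∈ Finset.Icc 1 n, X k ω) / n := by gcongr
      have h5 : a * ∫ x, max 0 (min x (K:ℝ)) ∂μ
          ≤ (∑ k ∈ Finset.Icc 1 n,
            (P[(fun ω' => max 0 (min (X k ω') (K:ℝ)))|ℱ (k - 1)]) ω) / n := by
        rw [le_div_iff₀ hnpos]
        linarith
      have h6 : (∑ k ∈ Finset.Icc 1 n, max 0 (min (X k ω) (K:ℝ))) / n
          = (∑ k ∈ Finset.Icc 1 n,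
              (max 0 (min (X k ω) (K:ℝ)) -
                (P[(fun ω' => max 0 (min (X k ω') (K:ℝ)))|ℱ (k - 1)]) ω)) / n
            + (∑ k ∈ Finset.Icc 1 n,
              (P[(fun ω' => max 0 (min (X k ω') (K:ℝ)))|ℱ (k - 1)]) ω) / n := by
        rw [h2, add_div]
      linarith
    have h7 := liminf_le_liminf hlb_ev
      hwK.isBoundedUnder_ge hu_bddle.isCoboundedUnder_flip
    exact le_trans (le_of_eq hwK.liminf_eq.symm) h7
  refine ⟨?_, hlimsup⟩
  have ht : Tendsto (fun K : ℕ => a * ∫ x, max 0 (min x (K:ℝ)) ∂μ) atTop (𝓝 (a * mμ)) :=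
    hIKtend.const_mul a
  exact le_of_tendsto ht (Eventually.of_forall hliminf)
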